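/- arXiv:1912.00457 — 13 statements merged into one kernel-verified Lean document; each statement's English description precedes it below -/
import Mathlib

section
/- Let m, n ≥ 3 and let f : ZMod m × ZMod n → Fin 5 satisfy: |f(i+1,j) - f(i,j)| ≥ 2, |f(i,j+1) - f(i,j)| ≥ 2, f(i+2,j) ≠ f(i,j), f(i,j+2) ≠ f(i,j), and f(i+1,j+1) ≠ f(i,j) for all i, j. Then f(i,j) = f(i+1, j-1) for all i, j. -/
theorem stmt_1 (m n : ℕ) (hm : 3 ≤ m) (hn : 3 ≤ n)
    (f : ZMod m × ZMod n → Fin 5)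
    (h1 : ∀ i : ZMod m, ∀ j : ZMod n,
      (2 : ℤ) ≤ |((f (i + 1, j) : ℕ) : ℤ) - ((f (i, j) : ℕ) : ℤ)|)
    (h2 : ∀ i : ZMod m, ∀ j : ZMod n,
      (2 : ℤ) ≤ |((f (i, j + 1) : ℕ) : ℤ) - ((f (i, j) : ℕ) : ℤ)|)
    (h3 : ∀ i : ZMod m, ∀ j : ZMod n, f (i + 2, j) ≠ f (i, j))
    (h4 : ∀ i : ZMod m, ∀ j : ZMod n, f (i, j + 2) ≠ f (i, j))
    (h5 : ∀ i : ZMod m, ∀ j : ZMod n, f (i + 1, j + 1) ≠ f (i, j)) :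
    ∀ i : ZMod m, ∀ j : ZMod n, f (i, j) = f (i + 1, j - 1) := by
  intro i j
  have e1 : j - 2 + 1 = j - 1 := by ring
  have e2 : j - 2 + 2 = j := by ring
  have e3 : j - 1 + 1 = j := by ring
  -- values at the six points
  -- A=(i,j-2) B=(i,j-1) C=(i,j) D=(i+1,j-1) E=(i+1,j) F=(i+2,j)
  have c1 := h2 i (j - 2)
  rw [e1] at c1   -- |B - A| ≥ 2
  have c2 := h4 i (j - 2)
  rw [e2] at c2   -- C ≠ A
  have c3 := h5 i (j - 2)
  rw [e1] at c3   -- D ≠ A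
  have c4 := h1 i (j - 1) -- |D - B|
  have c5 := h2 i (j - 1)
  rw [e3] at c5   -- |C - B|
  have c6 := h5 i (j - 1)
  rw [e3] at c6   -- E ≠ B
  have c7 := h1 i j -- |E - C|
  have c8 := h3 i j -- F ≠ C
  have c9 := h2 (i + 1) (j - 1)
  rw [e3] at c9   -- |E - D|
  have e4 : i + 1 + 1 = i + 2 := by ring
  have c10 := h5 (i + 1) (j - 1)
  rw [e3, e4] at c10  -- F ≠ D
  have c11 := h1 (i + 1) j
  rw [e4] at c11 -- |F - E|
  have hA : (f (i, j - 2)).val < 5 := (f (i, j - 2)).isLt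
  have hB : (f (i, j - 1)).val < 5 := (f (i, j - 1)).isLt
  have hC : (f (i, j)).val < 5 := (f (i, j)).isLt
  have hD : (f (i + 1, j - 1)).val < 5 := (f (i + 1, j - 1)).isLt
  have hE : (f (i + 1, j)).val < 5 := (f (i + 1, j)).isLt
  have hF : (f (i + 2, j)).val < 5 := (f (i + 2, j)).isLt
  have n2 : (f (i, j)).val ≠ (f (i, j - 2)).val := fun h => c2 (Fin.ext h)
  have n3 : (f (i + 1, j - 1)).val ≠ (f (i, j - 2)).val := fun h => c3 (Fin.ext h)
  have n6 : (f (i + 1, j)).val ≠ (f (i, j - 1)).val := fun h => c6 (Fin.ext h)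
  have n8 : (f (i + 2, j)).val ≠ (f (i, j)).val := fun h => c8 (Fin.ext h)
  have n10 : (f (i + 2, j)).val ≠ (f (i + 1, j - 1)).val := fun h => c10 (Fin.ext h)
  apply Fin.ext
  rcases le_abs.mp c1 with d1 | d1 <;>
  rcases le_abs.mp c4 with d4 | d4 <;>
  rcases le_abs.mp c5 with d5 | d5 <;>
  rcases le_abs.mp c7 with d7 | d7 <;>
  rcases le_abs.mp c9 with d9 | d9 <;>
  rcases le_abs.mp c11 with d11 | d11 <;>
  omega
end

section
/- If m, n ≥ 3 and d = gcd(m,n) divides both m and n with d ≥ 3, and there exists a 4-L(2,1)-labeling g : ZMod d → Fin 5 of the oriented cycle C_d, then the function f : ZMod m × ZMod n → Fin 5 defined by f(i,j) = g((i.val + j.val : ℤ) mod d) is a 4-L(2,1)-labeling of C_m □ C_n. -/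
lemma stmt_2_aux_mod (d m : ℕ) (hdm : d ∣ m) (a : ℕ) :
    ((a % m : ℕ) : ZMod d) = (a : ZMod d) := by
  conv_rhs => rw [← Nat.mod_add_div a m]
  push_cast
  rw [(ZMod.natCast_eq_zero_iff m d).mpr hdm]
  ring

lemma stmt_2_aux_int (d : ℕ) (a : ℤ) : ((a % (d : ℤ) : ℤ) : ZMod d) = (a : ZMod d) := by
  conv_rhs => rw [← Int.emod_add_mul_ediv a d]
  push_cast
  rw [ZMod.natCast_self]
  ring

lemma stmt_2_shift (d m : ℕ) (hm : m ≠ 0) (hdm : d ∣ m) (i : ZMod m) (k : ℕ) :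
    (((i + (k : ZMod m)).val : ℕ) : ZMod d) = (i.val : ZMod d) + k := by
  haveI : NeZero m := ⟨hm⟩
  rw [ZMod.val_add, stmt_2_aux_mod d m hdm]
  push_cast
  rw [ZMod.val_natCast, stmt_2_aux_mod d m hdm]

theorem stmt_2 (m n d : ℕ) (hm : 3 ≤ m) (hn : 3 ≤ n)
    (hd : d = Nat.gcd m n) (hd3 : 3 ≤ d)
    (g : ZMod d → Fin 5)
    (hg1 : ∀ i : ZMod d, (2 : ℤ) ≤ |((g (i + 1) : ℕ) : ℤ) - ((g i : ℕ) : ℤ)|)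
    (hg2 : ∀ i : ZMod d, g (i + 2) ≠ g i)
    (f : ZMod m × ZMod n → Fin 5)
    (hf : ∀ i : ZMod m, ∀ j : ZMod n,
      f (i, j) = g ((((i.val : ℤ) + (j.val : ℤ)) % (d : ℤ) : ℤ)) ) :
    (∀ i : ZMod m, ∀ j : ZMod n,
      (2 : ℤ) ≤ |((f (i + 1, j) : ℕ) : ℤ) - ((f (i, j) : ℕ) : ℤ)|) ∧
    (∀ i : ZMod m, ∀ j : ZMod n,
      (2 : ℤ) ≤ |((f (i, j + 1) : ℕ) : ℤ) - ((f (i, j) : ℕ) : ℤ)|) ∧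
    (∀ i : ZMod m, ∀ j : ZMod n, f (i + 2, j) ≠ f (i, j)) ∧
    (∀ i : ZMod m, ∀ j : ZMod n, f (i, j + 2) ≠ f (i, j)) ∧
    (∀ i : ZMod m, ∀ j : ZMod n, f (i + 1, j + 1) ≠ f (i, j)) := by
  have hdm : d ∣ m := hd ▸ Nat.gcd_dvd_left m n
  have hdn : d ∣ n := hd ▸ Nat.gcd_dvd_right m n
  have hm0 : m ≠ 0 := by omega
  have hn0 : n ≠ 0 := by omega
  have key : ∀ (i : ZMod m) (j : ZMod n),
      f (i, j) = g ((i.val : ZMod d) + (j.val : ZMod d)) := by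
    intro i j
    rw [hf, stmt_2_aux_int]
    push_cast
    ring_nf
  have sm : ∀ (i : ZMod m) (k : ℕ),
      (((i + (k : ZMod m)).val : ℕ) : ZMod d) = (i.val : ZMod d) + k :=
    stmt_2_shift d m hm0 hdm
  have sn : ∀ (j : ZMod n) (k : ℕ),
      (((j + (k : ZMod n)).val : ℕ) : ZMod d) = (j.val : ZMod d) + k :=
    stmt_2_shift d n hn0 hdn
  refine ⟨?_, ?_, ?_, ?_, ?_⟩
  · intro i j
    rw [key, key]
    have h := sm i 1
    push_cast at h
    rw [h]
    rw [show (i.val : ZMod d) + 1 + (j.val : ZMod d)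
        = ((i.val : ZMod d) + (j.val : ZMod d)) + 1 by ring]
    exact hg1 _
  · intro i j
    rw [key, key]
    have h := sn j 1
    push_cast at h
    rw [h]
    rw [show (i.val : ZMod d) + ((j.val : ZMod d) + 1)
        = ((i.val : ZMod d) + (j.val : ZMod d)) + 1 by ring]
    exact hg1 _
  · intro i j
    rw [key, key]
    have h := sm i 2
    push_cast at h
    rw [h]
    rw [show (i.val : ZMod d) + 2 + (j.val : ZMod d)
        = ((i.val : ZMod d) + (j.val : ZMod d)) + 2 by ring]
    exact hg2 _
  · intro i j
    rw [key, key]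
    have h := sn j 2
    push_cast at h
    rw [h]
    rw [show (i.val : ZMod d) + ((j.val : ZMod d) + 2)
        = ((i.val : ZMod d) + (j.val : ZMod d)) + 2 by ring]
    exact hg2 _
  · intro i j
    rw [key, key]
    have h1 := sm i 1
    have h2 := sn j 1
    push_cast at h1 h2
    rw [h1, h2]
    rw [show (i.val : ZMod d) + 1 + ((j.val : ZMod d) + 1)
        = ((i.val : ZMod d) + (j.val : ZMod d)) + 2 by ring]
    exact hg2 _
end

section
/- Suppose gcd(m,n) ∈ {1,2} with m, n ≥ 3 and m ≠ n. Then there is no function f : ZMod m × ZMod n → Fin 5 satisfying the 4-L(2,1)-labeling conditions of C_m □ C_n. -/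
/-- Two labels differ by at least 2. -/
def far (x y : Fin 5) : Prop := x.val + 2 ≤ y.val ∨ y.val + 2 ≤ x.val

instance (x y : Fin 5) : Decidable (far x y) := by unfold far; infer_instance

lemma far_symm {x y : Fin 5} (h : far x y) : far y x := h.symm

lemma far_of {x y : Fin 5} (h : (2:ℤ) ≤ |((x:ℕ):ℤ) - ((y:ℕ):ℤ)|) : far x y := by
  rcases abs_cases (((x:ℕ):ℤ) - ((y:ℕ):ℤ)) with ⟨h1, _⟩ | ⟨h1, _⟩ <;> unfold far <;> omega

/-- A label in {1,2,3} cannot have three pairwise distinct far labels. -/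
lemma keyA : ∀ c X Y Z : Fin 5, far X c → far Y c → far Z c →
    X ≠ Y → X ≠ Z → Y ≠ Z → 1 ≤ c.val → c.val ≤ 3 → False := by decide

/-- In a unit square, if the two anti-diagonal neighbours of a corner with
extreme label differ, the opposite corner has label in {1,2,3}. -/
lemma keyB : ∀ a N E d : Fin 5, (a.val = 0 ∨ a.val = 4) →
    far N a → far E a → far d N → far d E → d ≠ a → N ≠ E →
    1 ≤ d.val ∧ d.val ≤ 3 := by decide

theorem stmt_3 (m n : ℕ) (hm : 3 ≤ m) (hn : 3 ≤ n) (hmn : m ≠ n)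
    (hgcd : Nat.gcd m n = 1 ∨ Nat.gcd m n = 2) :
    ¬ ∃ f : ZMod m × ZMod n → Fin 5,
      (∀ i : ZMod m, ∀ j : ZMod n,
        (2 : ℤ) ≤ |((f (i + 1, j) : ℕ) : ℤ) - ((f (i, j) : ℕ) : ℤ)|) ∧
      (∀ i : ZMod m, ∀ j : ZMod n,
        (2 : ℤ) ≤ |((f (i, j + 1) : ℕ) : ℤ) - ((f (i, j) : ℕ) : ℤ)|) ∧
      (∀ i : ZMod m, ∀ j : ZMod n, f (i + 2, j) ≠ f (i, j)) ∧
      (∀ i : ZMod m, ∀ j : ZMod n, f (i, j + 2) ≠ f (i, j)) ∧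
      (∀ i : ZMod m, ∀ j : ZMod n, f (i + 1, j + 1) ≠ f (i, j)) := by
  rintro ⟨f, h1, h2, h3, h4, h5⟩
  -- Key fact: f(i, j+1) = f(i+1, j).
  have key : ∀ (i : ZMod m) (j : ZMod n), f (i, j + 1) = f (i + 1, j) := by
    intro i j
    by_contra hNE
    have hN : far (f (i, j + 1)) (f (i, j)) := far_of (h2 i j)
    have hE : far (f (i + 1, j)) (f (i, j)) := far_of (h1 i j)
    have eS1 : j - 1 + 1 = j := by ring
    have eS2 : j - 1 + 2 = j + 1 := by ring
    have eW1 : i - 1 + 1 = i := by ring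
    have eW2 : i - 1 + 2 = i + 1 := by ring
    have eN2 : j + 1 + 1 = j + 2 := by ring
    have hS : far (f (i, j)) (f (i, j - 1)) := far_of (by have := h2 i (j - 1); rwa [eS1] at this)
    have hNS : f (i, j + 1) ≠ f (i, j - 1) := by have := h4 i (j - 1); rwa [eS2] at this
    have hES : f (i + 1, j) ≠ f (i, j - 1) := by have := h5 i (j - 1); rwa [eS1] at this
    have hdN : far (f (i + 1, j + 1)) (f (i, j + 1)) := far_of (h1 i (j + 1))
    have hdE : far (f (i + 1, j + 1)) (f (i + 1, j)) := far_of (h2 (i + 1) j)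
    have hda : f (i + 1, j + 1) ≠ f (i, j) := h5 i j
    have hN'd : far (f (i + 1, j + 2)) (f (i + 1, j + 1)) :=
      far_of (by have := h2 (i + 1) (j + 1); rwa [eN2] at this)
    have hN'N : f (i + 1, j + 2) ≠ f (i, j + 1) := by have := h5 i (j + 1); rwa [eN2] at this
    have hN'E : f (i + 1, j + 2) ≠ f (i + 1, j) := h4 (i + 1) j
    -- case on the value of the centre label a = f(i,j)
    set a := f (i, j) with ha
    rcases Nat.lt_or_ge a.val 1 with hc | hc
    · -- a = 0 : use keyB then keyA at the diagonal corner
      obtain ⟨hd1, hd2⟩ := keyB a (f (i, j + 1)) (f (i + 1, j)) (f (i + 1, j + 1))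
        (Or.inl (by omega)) hN hE hdN hdE hda hNE
      exact keyA (f (i + 1, j + 1)) (f (i + 1, j + 2)) (f (i, j + 1)) (f (i + 1, j))
        hN'd (far_symm hdN) (far_symm hdE) hN'N hN'E hNE hd1 hd2
    rcases Nat.lt_or_ge a.val 4 with hc2 | hc2
    · -- a ∈ {1,2,3} : keyA directly with N, E, S
      exact keyA a (f (i, j + 1)) (f (i + 1, j)) (f (i, j - 1))
        hN hE (far_symm hS) hNE hNS hES hc (by omega)
    · -- a = 4
      obtain ⟨hd1, hd2⟩ := keyB a (f (i, j + 1)) (f (i + 1, j)) (f (i + 1, j + 1))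
        (Or.inr (by have := a.isLt; omega)) hN hE hdN hdE hda hNE
      exact keyA (f (i + 1, j + 1)) (f (i + 1, j + 2)) (f (i, j + 1)) (f (i + 1, j))
        hN'd (far_symm hdN) (far_symm hdE) hN'N hN'E hNE hd1 hd2
  -- diagonal propagation
  have diag : ∀ (k : ℕ) (i : ZMod m) (j : ZMod n), f (i, j + (k : ZMod n)) = f (i + (k : ZMod m), j) := by
    intro k
    induction k with
    | zero => intro i j; simp
    | succ k ih =>
      intro i j
      have e1 : j + ((k : ℕ) + 1 : ℕ) = (j + 1) + (k : ZMod n) := by push_cast; ring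
      have e2 : i + ((k : ℕ) + 1 : ℕ) = (i + (k : ZMod m)) + 1 := by push_cast; ring
      rw [e1, ih i (j + 1), e2, ← key]
  -- period m in the second coordinate
  have perm : ∀ (i : ZMod m) (j : ZMod n), f (i, j + (m : ZMod n)) = f (i, j) := by
    intro i j
    have := diag m i j
    rwa [ZMod.natCast_self, add_zero] at this
  -- integer multiples of m are periods
  have perInt : ∀ (t : ℤ) (i : ZMod m) (j : ZMod n),
      f (i, j + (m : ZMod n) * (t : ZMod n)) = f (i, j) := by
    intro t i
    induction t using Int.induction_on with
    | zero => intro j; simp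
    | succ t ih =>
      intro j
      have e : j + (m : ZMod n) * ((t : ℤ) + 1 : ℤ) = (j + (m : ZMod n) * ((t : ℤ) : ZMod n)) + (m : ZMod n) := by
        push_cast; ring
      rw [e, perm, ih]
    | pred t ih =>
      intro j
      have e : (j + (m : ZMod n) * ((-(t : ℤ) - 1 : ℤ) : ZMod n)) + (m : ZMod n)
          = j + (m : ZMod n) * ((-(t : ℤ) : ℤ) : ZMod n) := by push_cast; ring
      calc f (i, j + (m : ZMod n) * ((-(t : ℤ) - 1 : ℤ) : ZMod n))
          = f (i, (j + (m : ZMod n) * ((-(t : ℤ) - 1 : ℤ) : ZMod n)) + (m : ZMod n)) := (perm i _).symm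
        _ = f (i, j + (m : ZMod n) * ((-(t : ℤ) : ℤ) : ZMod n)) := by rw [e]
        _ = f (i, j) := ih j
  -- the gcd is a period
  have perg : ∀ (i : ZMod m) (j : ZMod n), f (i, j + ((Nat.gcd m n : ℕ) : ZMod n)) = f (i, j) := by
    intro i j
    have hbez : ((Nat.gcd m n : ℕ) : ℤ) = m * Nat.gcdA m n + n * Nat.gcdB m n := Nat.gcd_eq_gcd_ab m n
    have hcast : ((Nat.gcd m n : ℕ) : ZMod n) = (m : ZMod n) * ((Nat.gcdA m n : ℤ) : ZMod n) := by
      have := congrArg (fun z : ℤ => (z : ZMod n)) hbez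
      push_cast at this
      simpa [ZMod.natCast_self] using this
    rw [hcast]
    exact perInt (Nat.gcdA m n) i j
  rcases hgcd with hg | hg
  · have := perg 0 0
    rw [hg] at this
    have h := h2 0 0
    rw [show ((0 : ZMod n) + 1) = (0 : ZMod n) + ((1 : ℕ) : ZMod n) by push_cast; ring, this] at h
    simp at h
  · have := perg 0 0
    rw [hg] at this
    have h := h4 0 0
    rw [show ((0 : ZMod n) + 2) = (0 : ZMod n) + ((2 : ℕ) : ZMod n) by push_cast; ring, this] at h
    exact h rfl
end

section
/- For m, n ≥ 40 with gcd(m,n) ≥ 3, the L(2,1)-labeling number of C_m □ C_n equals 4; i.e., there exists a 4-L(2,1)-labeling but no 3-L(2,1)-labeling of C_m □ C_n. -/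
/-- `f` is a `k`-`L(2,1)`-labeling of the Cartesian product of oriented cycles
`C_m □ C_n`. -/
def IsL21Cart (m n k : ℕ) (f : ZMod m × ZMod n → ℕ) : Prop :=
  (∀ v, f v ≤ k) ∧
  (∀ i : ZMod m, ∀ j : ZMod n, (2 : ℤ) ≤ |(f (i + 1, j) : ℤ) - (f (i, j) : ℤ)|) ∧
  (∀ i : ZMod m, ∀ j : ZMod n, (2 : ℤ) ≤ |(f (i, j + 1) : ℤ) - (f (i, j) : ℤ)|) ∧
  (∀ i : ZMod m, ∀ j : ZMod n, f (i + 2, j) ≠ f (i, j)) ∧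
  (∀ i : ZMod m, ∀ j : ZMod n, f (i, j + 2) ≠ f (i, j)) ∧
  (∀ i : ZMod m, ∀ j : ZMod n, f (i + 1, j + 1) ≠ f (i, j))

/-- Cyclic diagonal color sequence of period `d`. -/
def cfun (d t : ℕ) : ℕ :=
  if d % 3 = 0 then 2 * (t % 3)
  else if d % 3 = 1 then
    if t = 0 then 0 else if t = 1 then 3 else if t = 2 then 1 else if t = 3 then 4
    else 2 * ((t - 4) % 3)
  else
    if t = 0 then 0 else if t = 1 then 2 else if t = 2 then 4 else if t = 3 then 1
    else if t = 4 then 3 else 2 * ((t - 5) % 3)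

lemma cfun_le (d t : ℕ) : cfun d t ≤ 4 := by
  unfold cfun; split_ifs <;> first | contradiction | omega

set_option maxHeartbeats 1000000 in
lemma key' (d t : ℕ) (hd : 3 ≤ d) (ht : t < d) :
    (cfun d ((t+1) % d) + 2 ≤ cfun d t ∨ cfun d t + 2 ≤ cfun d ((t+1) % d))
    ∧ cfun d ((t+2) % d) ≠ cfun d t := by
  rcases (show t + 2 < d ∨ t + 2 = d ∨ t + 1 = d from by omega) with h | h | h
  · rw [Nat.mod_eq_of_lt (show t + 1 < d by omega), Nat.mod_eq_of_lt h]
    unfold cfun; split_ifs <;> first | contradiction | omega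
  · rw [Nat.mod_eq_of_lt (show t + 1 < d by omega),
      show (t+2) % d = 0 from by rw [h, Nat.mod_self]]
    unfold cfun; split_ifs <;> first | contradiction | omega
  · rw [show (t+1) % d = 0 from by rw [h, Nat.mod_self],
      show (t+2) % d = 1 from by
        rw [show t + 2 = d + 1 from by omega, Nat.add_mod_left, Nat.mod_eq_of_lt (by omega)]]
    unfold cfun; split_ifs <;> first | contradiction | omega

lemma key (d s : ℕ) (hd : 3 ≤ d) :
    (cfun d ((s+1) % d) + 2 ≤ cfun d (s % d) ∨ cfun d (s % d) + 2 ≤ cfun d ((s+1) % d))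
    ∧ cfun d ((s+2) % d) ≠ cfun d (s % d) := by
  have e1 : (s+1) % d = (s % d + 1) % d := ((Nat.mod_modEq s d).add_right 1).symm
  have e2 : (s+2) % d = (s % d + 2) % d := ((Nat.mod_modEq s d).add_right 2).symm
  rw [e1, e2]
  exact key' d (s % d) hd (Nat.mod_lt _ (by omega))

lemma vald {M d : ℕ} [NeZero M] (hd : d ∣ M) (i : ZMod M) (a : ℕ) :
    (i + (a : ZMod M)).val ≡ i.val + a [MOD d] := by
  have h : (i + (a : ZMod M)).val ≡ i.val + a [MOD M] := by
    rw [ZMod.val_add, ZMod.val_natCast]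
    exact (Nat.mod_modEq _ M).trans (Nat.ModEq.add_left _ (Nat.mod_modEq a M))
  exact h.of_dvd hd

theorem stmt_4 (m n : ℕ) (hm : 40 ≤ m) (hn : 40 ≤ n) (hgcd : 3 ≤ Nat.gcd m n) :
    IsLeast {k : ℕ | ∃ f, IsL21Cart m n k f} 4 := by
  constructor
  · -- membership: a 4-labeling exists
    set d := Nat.gcd m n with hdd
    have hd3 : 3 ≤ d := hgcd
    have hdm : d ∣ m := Nat.gcd_dvd_left m n
    have hdn : d ∣ n := Nat.gcd_dvd_right m n
    haveI : NeZero m := ⟨by omega⟩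
    haveI : NeZero n := ⟨by omega⟩
    have harg : ∀ (i : ZMod m) (j : ZMod n) (a b : ℕ),
        ((i + (a:ZMod m)).val + (j + (b:ZMod n)).val) % d = (i.val + j.val + (a + b)) % d := by
      intro i j a b
      have h := (vald hdm i a).add (vald hdn j b)
      calc ((i + (a:ZMod m)).val + (j + (b:ZMod n)).val) % d
          = (i.val + a + (j.val + b)) % d := h
        _ = (i.val + j.val + (a + b)) % d := by
            rw [show i.val + a + (j.val + b) = i.val + j.val + (a+b) from by omega]
    refine ⟨fun p => cfun d ((p.1.val + p.2.val) % d), ?_, ?_, ?_, ?_, ?_, ?_⟩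
    · intro v; exact cfun_le d _
    · intro i j
      dsimp only
      have e : ((i + 1).val + j.val) % d = (i.val + j.val + 1) % d := by
        have := harg i j 1 0; simpa using this
      rw [e]
      have hk := (key d (i.val + j.val) hd3).1
      rw [le_abs]; omega
    · intro i j
      dsimp only
      have e : (i.val + (j + 1).val) % d = (i.val + j.val + 1) % d := by
        have := harg i j 0 1; simpa using this
      rw [e]
      have hk := (key d (i.val + j.val) hd3).1
      rw [le_abs]; omega
    · intro i j
      dsimp only
      have e : ((i + 2).val + j.val) % d = (i.val + j.val + 2) % d := by
        have := harg i j 2 0; simpa using this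
      rw [e]
      exact (key d (i.val + j.val) hd3).2
    · intro i j
      dsimp only
      have e : (i.val + (j + 2).val) % d = (i.val + j.val + 2) % d := by
        have := harg i j 0 2; simpa using this
      rw [e]
      exact (key d (i.val + j.val) hd3).2
    · intro i j
      dsimp only
      have e : ((i + 1).val + (j + 1).val) % d = (i.val + j.val + 2) % d := by
        have := harg i j 1 1; simpa using this
      rw [e]
      exact (key d (i.val + j.val) hd3).2
  · -- lower bound: no labeling with k ≤ 3
    rintro k ⟨f, hle, h2, h3, h4, h5, h6⟩
    by_contra hlt
    push_neg at hlt
    have hb : ∀ v, f v ≤ 3 := fun v => le_trans (hle v) (by omega)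
    have claim : ∀ (i : ZMod m) (j : ZMod n),
        (f (i,j) ≤ 1 ∧ f (i+1,j) = 3) ∨ (2 ≤ f (i,j) ∧ f (i+1,j) = 0) := by
      intro i j
      have b1 := hb (i, j); have b2 := hb (i+1, j)
      have b3 := hb (i, j+1); have b4 := hb (i+1, j+1)
      have c1 := h2 i j
      have c2 := h3 i j
      have c3 := h3 (i+1) j
      have c4 := h2 i (j+1)
      have c5 := h6 i j
      rw [le_abs] at c1 c2 c3 c4
      omega
    have e1 : (0 : ZMod m) + 2 = 0 + 1 + 1 := by ring
    have e2 : (0 : ZMod m) + 1 + 2 = 0 + 1 + 1 + 1 := by ring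
    have k1 := claim 0 0
    have k2 := claim (0+1) 0
    have k3 := claim (0+1+1) 0
    have d1 := h4 0 0
    rw [e1] at d1
    have d2 := h4 (0+1) 0
    rw [e2] at d2
    omega
end

section
/- If 7 divides m and 7 divides n (m, n ≥ 3), then the function f : ZMod m × ZMod n → Fin 7 defined by f(i,j) = g((i.val + j.val) mod 7), where g maps residues 2,3,4,5,6,0,1 to 0,2,4,6,1,3,5 respectively, is a 6-L(2,1)-labeling of the strong product C_m ⊠ C_n. -/
private lemma key_val (m : ℕ) (hm : 0 < m) (h7 : 7 ∣ m) (i : ZMod m) (k : ℕ) :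
    ((i + (k : ZMod m)).val) % 7 = (i.val + k) % 7 := by
  haveI : NeZero m := ⟨hm.ne'⟩
  rw [ZMod.val_add, ZMod.val_natCast, Nat.mod_mod_of_dvd _ h7, Nat.add_mod,
    Nat.mod_mod_of_dvd _ h7, ← Nat.add_mod]

private lemma key2 (m n : ℕ) (hm : 0 < m) (hn : 0 < n) (h7m : 7 ∣ m) (h7n : 7 ∣ n)
    (i : ZMod m) (j : ZMod n) (a b : ℕ) :
    ((i + (a : ZMod m)).val + (j + (b : ZMod n)).val) % 7
      = ((i.val + j.val) % 7 + (a + b)) % 7 := by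
  conv_lhs => rw [Nat.add_mod]
  rw [key_val m hm h7m, key_val n hn h7n]
  omega

private lemma finL1 (t c : Fin 7) (hc : c.val = 1 ∨ c.val = 2) :
    (2 : ℤ) ≤ |((![(3 : Fin 7), 5, 0, 2, 4, 6, 1] (t + c) : ℕ) : ℤ)
      - ((![(3 : Fin 7), 5, 0, 2, 4, 6, 1] t : ℕ) : ℤ)| := by
  revert t c; decide

private lemma finL2 (t c : Fin 7) (hc : c.val = 2 ∨ c.val = 3 ∨ c.val = 4) :
    ![(3 : Fin 7), 5, 0, 2, 4, 6, 1] (t + c) ≠ ![(3 : Fin 7), 5, 0, 2, 4, 6, 1] t := by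
  revert t c; decide

private lemma fin_shift (s c : ℕ) (h1 : (s % 7 + c) % 7 < 7) (hs : s % 7 < 7) :
    (⟨(s % 7 + c) % 7, h1⟩ : Fin 7)
      = ⟨s % 7, hs⟩ + ⟨c % 7, Nat.mod_lt _ (by norm_num)⟩ := by
  apply Fin.ext
  simp only [Fin.add_def]
  omega

private lemma main1 (s c : ℕ) (hc : c = 1 ∨ c = 2)
    (h1 : (s % 7 + c) % 7 < 7) (hs : s % 7 < 7) :
    (2 : ℤ) ≤ |((![(3 : Fin 7), 5, 0, 2, 4, 6, 1] ⟨(s % 7 + c) % 7, h1⟩ : ℕ) : ℤ)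
      - ((![(3 : Fin 7), 5, 0, 2, 4, 6, 1] ⟨s % 7, hs⟩ : ℕ) : ℤ)| := by
  rw [fin_shift s c h1 hs]
  exact finL1 _ _ (by rcases hc with h | h <;> subst h <;> simp)

private lemma main2 (s c : ℕ) (hc : c = 2 ∨ c = 3 ∨ c = 4)
    (h1 : (s % 7 + c) % 7 < 7) (hs : s % 7 < 7) :
    ![(3 : Fin 7), 5, 0, 2, 4, 6, 1] ⟨(s % 7 + c) % 7, h1⟩
      ≠ ![(3 : Fin 7), 5, 0, 2, 4, 6, 1] ⟨s % 7, hs⟩ := by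
  rw [fin_shift s c h1 hs]
  exact finL2 _ _ (by rcases hc with h | h | h <;> subst h <;> simp)

theorem stmt_7 (m n : ℕ) (hm : 3 ≤ m) (hn : 3 ≤ n)
    (h7m : 7 ∣ m) (h7n : 7 ∣ n)
    (f : ZMod m × ZMod n → Fin 7)
    (hf : ∀ i : ZMod m, ∀ j : ZMod n,
      f (i, j) = ![(3 : Fin 7), 5, 0, 2, 4, 6, 1]
        ⟨(i.val + j.val) % 7, Nat.mod_lt _ (by norm_num)⟩) :
    (∀ i : ZMod m, ∀ j : ZMod n,
      ∀ ab : ZMod m × ZMod n, ab ∈ [((1 : ZMod m), (0 : ZMod n)), (0, 1), (1, 1)] →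
        (2 : ℤ) ≤ |((f (i + ab.1, j + ab.2) : ℕ) : ℤ) - ((f (i, j) : ℕ) : ℤ)|) ∧
    (∀ i : ZMod m, ∀ j : ZMod n,
      ∀ ab : ZMod m × ZMod n,
        ab ∈ [((2 : ZMod m), (0 : ZMod n)), (0, 2), (2, 1), (1, 2), (2, 2)] →
        f (i + ab.1, j + ab.2) ≠ f (i, j)) := by
  have hm0 : 0 < m := by omega
  have hn0 : 0 < n := by omega
  have key : ∀ (i : ZMod m) (j : ZMod n) (a b c : ℕ), a + b = c →
      f (i + (a : ZMod m), j + (b : ZMod n))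
        = ![(3 : Fin 7), 5, 0, 2, 4, 6, 1]
            ⟨((i.val + j.val) % 7 + c) % 7, Nat.mod_lt _ (by norm_num)⟩ := by
    intro i j a b c hc
    subst hc
    rw [hf]
    exact congrArg _ (Fin.ext (key2 m n hm0 hn0 h7m h7n i j a b))
  constructor
  · intro i j ab hab
    fin_cases hab
    · rw [show ((1:ZMod m),(0:ZMod n)).1 = ((1:ℕ):ZMod m) from by norm_num,
          show ((1:ZMod m),(0:ZMod n)).2 = ((0:ℕ):ZMod n) from by norm_num,
          key i j 1 0 1 rfl, hf]
      exact main1 _ 1 (Or.inl rfl) _ _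
    · rw [show ((0:ZMod m),(1:ZMod n)).1 = ((0:ℕ):ZMod m) from by norm_num,
          show ((0:ZMod m),(1:ZMod n)).2 = ((1:ℕ):ZMod n) from by norm_num,
          key i j 0 1 1 rfl, hf]
      exact main1 _ 1 (Or.inl rfl) _ _
    · rw [show ((1:ZMod m),(1:ZMod n)).1 = ((1:ℕ):ZMod m) from by norm_num,
          show ((1:ZMod m),(1:ZMod n)).2 = ((1:ℕ):ZMod n) from by norm_num,
          key i j 1 1 2 rfl, hf]
      exact main1 _ 2 (Or.inr rfl) _ _
  · intro i j ab hab
    fin_cases hab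
    · rw [show ((2:ZMod m),(0:ZMod n)).1 = ((2:ℕ):ZMod m) from by norm_num,
          show ((2:ZMod m),(0:ZMod n)).2 = ((0:ℕ):ZMod n) from by norm_num,
          key i j 2 0 2 rfl, hf]
      exact main2 _ 2 (Or.inl rfl) _ _
    · rw [show ((0:ZMod m),(2:ZMod n)).1 = ((0:ℕ):ZMod m) from by norm_num,
          show ((0:ZMod m),(2:ZMod n)).2 = ((2:ℕ):ZMod n) from by norm_num,
          key i j 0 2 2 rfl, hf]
      exact main2 _ 2 (Or.inl rfl) _ _
    · rw [show ((2:ZMod m),(1:ZMod n)).1 = ((2:ℕ):ZMod m) from by norm_num,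
          show ((2:ZMod m),(1:ZMod n)).2 = ((1:ℕ):ZMod n) from by norm_num,
          key i j 2 1 3 rfl, hf]
      exact main2 _ 3 (Or.inr (Or.inl rfl)) _ _
    · rw [show ((1:ZMod m),(2:ZMod n)).1 = ((1:ℕ):ZMod m) from by norm_num,
          show ((1:ZMod m),(2:ZMod n)).2 = ((2:ℕ):ZMod n) from by norm_num,
          key i j 1 2 3 rfl, hf]
      exact main2 _ 3 (Or.inr (Or.inl rfl)) _ _
    · rw [show ((2:ZMod m),(2:ZMod n)).1 = ((2:ℕ):ZMod m) from by norm_num,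
          show ((2:ZMod m),(2:ZMod n)).2 = ((2:ℕ):ZMod n) from by norm_num,
          key i j 2 2 4 rfl, hf]
      exact main2 _ 4 (Or.inr (Or.inr rfl)) _ _
end

section
/- Let d ≥ 5 and let c : ZMod d → Fin 7 satisfy: |c(i+1)-c(i)| ≥ 2, |c(i+2)-c(i)| ≥ 2, c(i+3) ≠ c(i), and c(i+4) ≠ c(i) for all i. Then 7 divides d. -/
namespace Stmt8Aux

def far (x y : Fin 7) : Bool := decide (x.val + 2 ≤ y.val ∨ y.val + 2 ≤ x.val)

def good (x : Fin 7) : List (Fin 7) → Bool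
  | [] => true
  | [a] => far x a
  | [a, b] => far x a && far x b
  | [a, b, c] => far x a && far x b && (x != c)
  | a :: b :: c :: e :: _ => far x a && far x b && (x != c) && (x != e)

def ext (l : List (List (Fin 7))) : List (List (Fin 7)) :=
  l.flatMap (fun w => (List.finRange 7).filterMap
    (fun x => if good x w then some (x :: w) else none))

def windows : ℕ → List (List (Fin 7))
  | 0 => [[]]
  | n + 1 => ext (windows n)

lemma mem_ext {w : List (Fin 7)} {l : List (List (Fin 7))} (hw : w ∈ l) {x : Fin 7}
    (hx : good x w = true) : (x :: w) ∈ ext l := by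
  simp only [ext, List.mem_flatMap, List.mem_filterMap]
  exact ⟨w, hw, x, List.mem_finRange x, by simp [hx]⟩

lemma key : ∀ w ∈ windows 14, w.getD 3 0 = w.getD 10 0 := by decide

def seqList {d : ℕ} (c : ZMod d → Fin 7) (i : ZMod d) : ℕ → List (Fin 7)
  | 0 => []
  | n + 1 => c (i + (n : ℕ)) :: seqList c i n

lemma far_of_abs {a b : Fin 7} (h : (2 : ℤ) ≤ |((a : ℕ) : ℤ) - ((b : ℕ) : ℤ)|) :
    far a b = true := by
  simp only [far, decide_eq_true_eq]
  rcases abs_cases (((a : ℕ) : ℤ) - ((b : ℕ) : ℤ)) with ⟨h1, _⟩ | ⟨h1, _⟩ <;> omega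

end Stmt8Aux

theorem stmt_8 (d : ℕ) (hd : 5 ≤ d) (c : ZMod d → Fin 7)
    (h1 : ∀ i : ZMod d, (2 : ℤ) ≤ |((c (i + 1) : ℕ) : ℤ) - ((c i : ℕ) : ℤ)|)
    (h2 : ∀ i : ZMod d, (2 : ℤ) ≤ |((c (i + 2) : ℕ) : ℤ) - ((c i : ℕ) : ℤ)|)
    (h3 : ∀ i : ZMod d, c (i + 3) ≠ c i)
    (h4 : ∀ i : ZMod d, c (i + 4) ≠ c i) :
    7 ∣ d := by
  classical
  have hne : NeZero d := ⟨by omega⟩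
  -- build windows
  have hgood : ∀ (n : ℕ) (i : ZMod d),
      Stmt8Aux.good (c (i + (n : ℕ))) (Stmt8Aux.seqList c i n) = true := by
    intro n i
    match n with
    | 0 => rfl
    | 1 =>
      simp only [Stmt8Aux.seqList, Stmt8Aux.good]
      have := h1 (i + (0 : ℕ))
      exact Stmt8Aux.far_of_abs (by
        have e : i + ((0:ℕ):ZMod d) + 1 = i + ((1:ℕ):ZMod d) := by push_cast; ring
        rwa [e] at this)
    | 2 =>
      simp only [Stmt8Aux.seqList, Stmt8Aux.good, Bool.and_eq_true]
      constructor
      · have := h1 (i + (1 : ℕ))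
        exact Stmt8Aux.far_of_abs (by
          have e : i + ((1:ℕ):ZMod d) + 1 = i + ((2:ℕ):ZMod d) := by push_cast; ring
          rwa [e] at this)
      · have := h2 (i + (0 : ℕ))
        exact Stmt8Aux.far_of_abs (by
          have e : i + ((0:ℕ):ZMod d) + 2 = i + ((2:ℕ):ZMod d) := by push_cast; ring
          rwa [e] at this)
    | 3 =>
      simp only [Stmt8Aux.seqList, Stmt8Aux.good, Bool.and_eq_true, bne_iff_ne, ne_eq]
      refine ⟨⟨?_, ?_⟩, ?_⟩
      · have := h1 (i + (2 : ℕ))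
        exact Stmt8Aux.far_of_abs (by
          have e : i + ((2:ℕ):ZMod d) + 1 = i + ((3:ℕ):ZMod d) := by push_cast; ring
          rwa [e] at this)
      · have := h2 (i + (1 : ℕ))
        exact Stmt8Aux.far_of_abs (by
          have e : i + ((1:ℕ):ZMod d) + 2 = i + ((3:ℕ):ZMod d) := by push_cast; ring
          rwa [e] at this)
      · have := h3 (i + (0 : ℕ))
        have e : i + ((0:ℕ):ZMod d) + 3 = i + ((3:ℕ):ZMod d) := by push_cast; ring
        rwa [e] at this
    | (m + 4) =>
      simp only [Stmt8Aux.seqList, Stmt8Aux.good, Bool.and_eq_true, bne_iff_ne, ne_eq]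
      refine ⟨⟨⟨?_, ?_⟩, ?_⟩, ?_⟩
      · have := h1 (i + ((m + 3 : ℕ) : ZMod d))
        exact Stmt8Aux.far_of_abs (by
          have e : i + ((m + 3 : ℕ):ZMod d) + 1 = i + ((m + 4:ℕ):ZMod d) := by
            push_cast; ring
          rwa [e] at this)
      · have := h2 (i + ((m + 2 : ℕ) : ZMod d))
        exact Stmt8Aux.far_of_abs (by
          have e : i + ((m + 2 : ℕ):ZMod d) + 2 = i + ((m + 4:ℕ):ZMod d) := by
            push_cast; ring
          rwa [e] at this)
      · have := h3 (i + ((m + 1 : ℕ) : ZMod d))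
        have e : i + ((m + 1 : ℕ):ZMod d) + 3 = i + ((m + 4:ℕ):ZMod d) := by
          push_cast; ring
        rwa [e] at this
      · have := h4 (i + ((m : ℕ) : ZMod d))
        have e : i + ((m : ℕ):ZMod d) + 4 = i + ((m + 4:ℕ):ZMod d) := by
          push_cast; ring
        rwa [e] at this
  have hmem : ∀ (n : ℕ) (i : ZMod d), Stmt8Aux.seqList c i n ∈ Stmt8Aux.windows n := by
    intro n
    induction n with
    | zero => intro i; simp [Stmt8Aux.seqList, Stmt8Aux.windows]
    | succ m ih =>
      intro i
      exact Stmt8Aux.mem_ext (ih i) (hgood m i)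
  -- period 7
  have hper : ∀ j : ZMod d, c (j + 7) = c j := by
    intro j
    have hk := Stmt8Aux.key _ (hmem 14 (j - 3))
    have e3 : (Stmt8Aux.seqList c (j - 3) 14).getD 3 0 = c (j - 3 + ((10:ℕ) : ZMod d)) := by
      simp [Stmt8Aux.seqList]
    have e10 : (Stmt8Aux.seqList c (j - 3) 14).getD 10 0 = c (j - 3 + ((3:ℕ) : ZMod d)) := by
      simp [Stmt8Aux.seqList]
    rw [e3, e10] at hk
    have e1 : j - 3 + ((10:ℕ) : ZMod d) = j + 7 := by push_cast; ring
    have e2 : j - 3 + ((3:ℕ) : ZMod d) = j := by push_cast; ring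
    rwa [e1, e2] at hk
  -- multiples of 7
  have hmul : ∀ (m : ℕ) (j : ZMod d), c (j + 7 * (m : ℕ)) = c j := by
    intro m
    induction m with
    | zero => intro j; simp
    | succ k ih =>
      intro j
      have e : j + 7 * ((k + 1 : ℕ) : ZMod d) = (j + 7 * (k : ℕ)) + 7 := by push_cast; ring
      rw [e, hper, ih]
  by_contra hdvd
  have hcop : Nat.Coprime 7 d :=
    (Nat.Prime.coprime_iff_not_dvd (by norm_num)).mpr hdvd
  have hu : ∃ b : ZMod d, 7 * b = 1 := by
    refine ⟨((ZMod.unitOfCoprime 7 hcop)⁻¹ : (ZMod d)ˣ), ?_⟩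
    have h7 : ((ZMod.unitOfCoprime 7 hcop : (ZMod d)ˣ) : ZMod d) = (7 : ZMod d) := by
      rw [ZMod.coe_unitOfCoprime]; push_cast; ring
    rw [← h7, ← Units.val_mul, mul_inv_cancel, Units.val_one]
  obtain ⟨b, hb⟩ := hu
  have hc1 : ∀ j : ZMod d, c (j + 1) = c j := by
    intro j
    have : c (j + 7 * ((b.val : ℕ) : ZMod d)) = c j := hmul b.val j
    rwa [ZMod.natCast_val, ZMod.cast_id, hb] at this
  have := h1 0
  rw [hc1 0] at this
  simp at this
end

section
/- Let d ≥ 5 and let c : ZMod d → Fin 7 be an L(2,2,1,1)-labeling (|c(i+1)-c(i)| ≥ 2, |c(i+2)-c(i)| ≥ 2, c(i+3) ≠ c(i), c(i+4) ≠ c(i) for all i). Then c uses the color 0 or the color 6, i.e., there exists i with c(i) = 0 or c(i) = 6. -/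
theorem stmt_9 (d : ℕ) (hd : 5 ≤ d) (c : ZMod d → Fin 7)
    (h1 : ∀ i : ZMod d, (2 : ℤ) ≤ |((c (i + 1) : ℕ) : ℤ) - ((c i : ℕ) : ℤ)|)
    (h2 : ∀ i : ZMod d, (2 : ℤ) ≤ |((c (i + 2) : ℕ) : ℤ) - ((c i : ℕ) : ℤ)|)
    (h3 : ∀ i : ZMod d, c (i + 3) ≠ c i)
    (h4 : ∀ i : ZMod d, c (i + 4) ≠ c i) :
    ∃ i : ZMod d, c i = 0 ∨ c i = 6 := by
  by_contra h
  push_neg at h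
  have key : ∀ i : ZMod d, 1 ≤ (c i : ℕ) ∧ (c i : ℕ) ≤ 5 := by
    intro i
    obtain ⟨h0, h6⟩ := h i
    have hlt := (c i).isLt
    have h0' : (c i : ℕ) ≠ 0 := fun hh => h0 (Fin.ext (by simpa using hh))
    have h6' : (c i : ℕ) ≠ 6 := fun hh => h6 (Fin.ext (by simpa using hh))
    omega
  have ha : (1 : ZMod d) + 1 = 2 := by ring
  have hb : (1 : ZMod d) + 2 = 3 := by ring
  have hc : (2 : ZMod d) + 1 = 3 := by ring
  have e1 := h1 0
  have e2 := h2 0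
  have e3 := h1 1
  have e4 := h2 1
  have e5 := h1 2
  have e6 := h3 0
  rw [zero_add] at e1 e2 e6
  rw [ha] at e3
  rw [hb] at e4
  rw [hc] at e5
  have e6' : (c 3 : ℕ) ≠ (c 0 : ℕ) := fun hh => e6 (Fin.ext hh)
  rw [le_abs] at e1 e2 e3 e4 e5
  obtain ⟨k0, k0'⟩ := key 0
  obtain ⟨k1, k1'⟩ := key 1
  obtain ⟨k2, k2'⟩ := key 2
  obtain ⟨k3, k3'⟩ := key 3
  rcases e1 with e1 | e1 <;> rcases e2 with e2 | e2 <;> rcases e3 with e3 | e3 <;>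
    rcases e4 with e4 | e4 <;> rcases e5 with e5 | e5 <;> omega
end

section
/- Let d ≥ 5 and let c : ZMod d → Fin 7 be an L(2,2,1,1)-labeling with c(0) = 0. Then {c(1), c(-1)} = {2, 5}. -/
set_option maxHeartbeats 2000000 in
theorem key_stmt_10 (b4 b3 b2 b1 z a1 a2 a3 a4 : ℕ) (hz : z = 0) (hbb4 : b4 < 7) (hbb3 : b3 < 7) (hbb2 : b2 < 7) (hbb1 : b1 < 7) (hba1 : a1 < 7) (hba2 : a2 < 7) (hba3 : a3 < 7) (hba4 : a4 < 7) (d1 : b4 + 2 ≤ b3 ∨ b3 + 2 ≤ b4) (d2 : b3 + 2 ≤ b2 ∨ b2 + 2 ≤ b3) (d3 : b2 + 2 ≤ b1 ∨ b1 + 2 ≤ b2) (d4 : b1 + 2 ≤ z ∨ z + 2 ≤ b1) (d5 : z + 2 ≤ a1 ∨ a1 + 2 ≤ z) (d6 : a1 + 2 ≤ a2 ∨ a2 + 2 ≤ a1) (d7 : a2 + 2 ≤ a3 ∨ a3 + 2 ≤ a2) (d8 : a3 + 2 ≤ a4 ∨ a4 + 2 ≤ a3) (d9 : b4 + 2 ≤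 b2 ∨ b2 + 2 ≤ b4) (d10 : b3 + 2 ≤ b1 ∨ b1 + 2 ≤ b3) (d11 : b2 + 2 ≤ z ∨ z + 2 ≤ b2) (d12 : b1 + 2 ≤ a1 ∨ a1 + 2 ≤ b1) (d13 : z + 2 ≤ a2 ∨ a2 + 2 ≤ z) (d14 : a1 + 2 ≤ a3 ∨ a3 + 2 ≤ a1) (d15 : a2 + 2 ≤ a4 ∨ a4 + 2 ≤ a2) (e1 : b4 ≠ b1) (e2 : b3 ≠ z) (e3 : b2 ≠ a1) (e4 : b1 ≠ a2) (e5 : z ≠ a3) (e6 : a1 ≠ a4) (e7 : b4 ≠ z) (e8 : b3 ≠ a1) (e9 : b2 ≠ a2) (e10 : b1 ≠ a3) (e11 : z ≠ a4) :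
    (a1 = 2 ∧ b1 = 5) ∨ (a1 = 5 ∧ b1 = 2) := by
  subst hz
  interval_cases a1 <;> interval_cases b1 <;> omega

theorem absconv_stmt_10 (a b : ℕ) (h : (2:ℤ) ≤ |((a:ℤ) - (b:ℤ))|) : b + 2 ≤ a ∨ a + 2 ≤ b := by
  rcases le_abs.mp h with h | h
  · left; omega
  · right; omega


theorem stmt_10 (d : ℕ) (hd : 5 ≤ d) (c : ZMod d → Fin 7)
    (h1 : ∀ i : ZMod d, (2 : ℤ) ≤ |((c (i + 1) : ℕ) : ℤ) - ((c i : ℕ) : ℤ)|)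
    (h2 : ∀ i : ZMod d, (2 : ℤ) ≤ |((c (i + 2) : ℕ) : ℤ) - ((c i : ℕ) : ℤ)|)
    (h3 : ∀ i : ZMod d, c (i + 3) ≠ c i)
    (h4 : ∀ i : ZMod d, c (i + 4) ≠ c i)
    (h0 : c 0 = 0) :
    (c 1 = 2 ∧ c (-1) = 5) ∨ (c 1 = 5 ∧ c (-1) = 2) := by
  have Bb4 : (c (-4 : ZMod d) : ℕ) < 7 := (c (-4 : ZMod d)).isLt
  have Bb3 : (c (-3 : ZMod d) : ℕ) < 7 := (c (-3 : ZMod d)).isLt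
  have Bb2 : (c (-2 : ZMod d) : ℕ) < 7 := (c (-2 : ZMod d)).isLt
  have Bb1 : (c (-1 : ZMod d) : ℕ) < 7 := (c (-1 : ZMod d)).isLt
  have Ba1 : (c (1 : ZMod d) : ℕ) < 7 := (c (1 : ZMod d)).isLt
  have Ba2 : (c (2 : ZMod d) : ℕ) < 7 := (c (2 : ZMod d)).isLt
  have Ba3 : (c (3 : ZMod d) : ℕ) < 7 := (c (3 : ZMod d)).isLt
  have Ba4 : (c (4 : ZMod d) : ℕ) < 7 := (c (4 : ZMod d)).isLt
  have Hz : (c (0 : ZMod d) : ℕ) = 0 := by rw [h0]; rfl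
  have D1 : (c (-4 : ZMod d) : ℕ) + 2 ≤ (c (-3 : ZMod d) : ℕ) ∨ (c (-3 : ZMod d) : ℕ) + 2 ≤ (c (-4 : ZMod d) : ℕ) := by
    refine absconv_stmt_10 _ _ ?_
    have h := h1 (-4 : ZMod d)
    rw [show (-4 : ZMod d) + 1 = (-3 : ZMod d) from by ring] at h
    exact h
  have D2 : (c (-3 : ZMod d) : ℕ) + 2 ≤ (c (-2 : ZMod d) : ℕ) ∨ (c (-2 : ZMod d) : ℕ) + 2 ≤ (c (-3 : ZMod d) : ℕ) := by
    refine absconv_stmt_10 _ _ ?_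
    have h := h1 (-3 : ZMod d)
    rw [show (-3 : ZMod d) + 1 = (-2 : ZMod d) from by ring] at h
    exact h
  have D3 : (c (-2 : ZMod d) : ℕ) + 2 ≤ (c (-1 : ZMod d) : ℕ) ∨ (c (-1 : ZMod d) : ℕ) + 2 ≤ (c (-2 : ZMod d) : ℕ) := by
    refine absconv_stmt_10 _ _ ?_
    have h := h1 (-2 : ZMod d)
    rw [show (-2 : ZMod d) + 1 = (-1 : ZMod d) from by ring] at h
    exact h
  have D4 : (c (-1 : ZMod d) : ℕ) + 2 ≤ (c (0 : ZMod d) : ℕ) ∨ (c (0 : ZMod d) : ℕ) + 2 ≤ (c (-1 : ZMod d) : ℕ) := by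
    refine absconv_stmt_10 _ _ ?_
    have h := h1 (-1 : ZMod d)
    rw [show (-1 : ZMod d) + 1 = (0 : ZMod d) from by ring] at h
    exact h
  have D5 : (c (0 : ZMod d) : ℕ) + 2 ≤ (c (1 : ZMod d) : ℕ) ∨ (c (1 : ZMod d) : ℕ) + 2 ≤ (c (0 : ZMod d) : ℕ) := by
    refine absconv_stmt_10 _ _ ?_
    have h := h1 (0 : ZMod d)
    rw [show (0 : ZMod d) + 1 = (1 : ZMod d) from by ring] at h
    exact h
  have D6 : (c (1 : ZMod d) : ℕ) + 2 ≤ (c (2 : ZMod d) : ℕ) ∨ (c (2 : ZMod d) : ℕ) + 2 ≤ (c (1 : ZMod d) : ℕ) := by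
    refine absconv_stmt_10 _ _ ?_
    have h := h1 (1 : ZMod d)
    rw [show (1 : ZMod d) + 1 = (2 : ZMod d) from by ring] at h
    exact h
  have D7 : (c (2 : ZMod d) : ℕ) + 2 ≤ (c (3 : ZMod d) : ℕ) ∨ (c (3 : ZMod d) : ℕ) + 2 ≤ (c (2 : ZMod d) : ℕ) := by
    refine absconv_stmt_10 _ _ ?_
    have h := h1 (2 : ZMod d)
    rw [show (2 : ZMod d) + 1 = (3 : ZMod d) from by ring] at h
    exact h
  have D8 : (c (3 : ZMod d) : ℕ) + 2 ≤ (c (4 : ZMod d) : ℕ) ∨ (c (4 : ZMod d) : ℕ) + 2 ≤ (c (3 : ZMod d) : ℕ) := by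
    refine absconv_stmt_10 _ _ ?_
    have h := h1 (3 : ZMod d)
    rw [show (3 : ZMod d) + 1 = (4 : ZMod d) from by ring] at h
    exact h
  have D9 : (c (-4 : ZMod d) : ℕ) + 2 ≤ (c (-2 : ZMod d) : ℕ) ∨ (c (-2 : ZMod d) : ℕ) + 2 ≤ (c (-4 : ZMod d) : ℕ) := by
    refine absconv_stmt_10 _ _ ?_
    have h := h2 (-4 : ZMod d)
    rw [show (-4 : ZMod d) + 2 = (-2 : ZMod d) from by ring] at h
    exact h
  have D10 : (c (-3 : ZMod d) : ℕ) + 2 ≤ (c (-1 : ZMod d) : ℕ) ∨ (c (-1 : ZMod d) : ℕ) + 2 ≤ (c (-3 : ZMod d) : ℕ) := by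
    refine absconv_stmt_10 _ _ ?_
    have h := h2 (-3 : ZMod d)
    rw [show (-3 : ZMod d) + 2 = (-1 : ZMod d) from by ring] at h
    exact h
  have D11 : (c (-2 : ZMod d) : ℕ) + 2 ≤ (c (0 : ZMod d) : ℕ) ∨ (c (0 : ZMod d) : ℕ) + 2 ≤ (c (-2 : ZMod d) : ℕ) := by
    refine absconv_stmt_10 _ _ ?_
    have h := h2 (-2 : ZMod d)
    rw [show (-2 : ZMod d) + 2 = (0 : ZMod d) from by ring] at h
    exact h
  have D12 : (c (-1 : ZMod d) : ℕ) + 2 ≤ (c (1 : ZMod d) : ℕ) ∨ (c (1 : ZMod d) : ℕ) + 2 ≤ (c (-1 : ZMod d) : ℕ) := by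
    refine absconv_stmt_10 _ _ ?_
    have h := h2 (-1 : ZMod d)
    rw [show (-1 : ZMod d) + 2 = (1 : ZMod d) from by ring] at h
    exact h
  have D13 : (c (0 : ZMod d) : ℕ) + 2 ≤ (c (2 : ZMod d) : ℕ) ∨ (c (2 : ZMod d) : ℕ) + 2 ≤ (c (0 : ZMod d) : ℕ) := by
    refine absconv_stmt_10 _ _ ?_
    have h := h2 (0 : ZMod d)
    rw [show (0 : ZMod d) + 2 = (2 : ZMod d) from by ring] at h
    exact h
  have D14 : (c (1 : ZMod d) : ℕ) + 2 ≤ (c (3 : ZMod d) : ℕ) ∨ (c (3 : ZMod d) : ℕ) + 2 ≤ (c (1 : ZMod d) : ℕ) := by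
    refine absconv_stmt_10 _ _ ?_
    have h := h2 (1 : ZMod d)
    rw [show (1 : ZMod d) + 2 = (3 : ZMod d) from by ring] at h
    exact h
  have D15 : (c (2 : ZMod d) : ℕ) + 2 ≤ (c (4 : ZMod d) : ℕ) ∨ (c (4 : ZMod d) : ℕ) + 2 ≤ (c (2 : ZMod d) : ℕ) := by
    refine absconv_stmt_10 _ _ ?_
    have h := h2 (2 : ZMod d)
    rw [show (2 : ZMod d) + 2 = (4 : ZMod d) from by ring] at h
    exact h
  have E1 : (c (-4 : ZMod d) : ℕ) ≠ (c (-1 : ZMod d) : ℕ) := by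
    have h := h3 (-4 : ZMod d)
    rw [show (-4 : ZMod d) + 3 = (-1 : ZMod d) from by ring] at h
    exact fun hh => Fin.val_ne_of_ne h hh.symm
  have E2 : (c (-3 : ZMod d) : ℕ) ≠ (c (0 : ZMod d) : ℕ) := by
    have h := h3 (-3 : ZMod d)
    rw [show (-3 : ZMod d) + 3 = (0 : ZMod d) from by ring] at h
    exact fun hh => Fin.val_ne_of_ne h hh.symm
  have E3 : (c (-2 : ZMod d) : ℕ) ≠ (c (1 : ZMod d) : ℕ) := by
    have h := h3 (-2 : ZMod d)
    rw [show (-2 : ZMod d) + 3 = (1 : ZMod d) from by ring] at h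
    exact fun hh => Fin.val_ne_of_ne h hh.symm
  have E4 : (c (-1 : ZMod d) : ℕ) ≠ (c (2 : ZMod d) : ℕ) := by
    have h := h3 (-1 : ZMod d)
    rw [show (-1 : ZMod d) + 3 = (2 : ZMod d) from by ring] at h
    exact fun hh => Fin.val_ne_of_ne h hh.symm
  have E5 : (c (0 : ZMod d) : ℕ) ≠ (c (3 : ZMod d) : ℕ) := by
    have h := h3 (0 : ZMod d)
    rw [show (0 : ZMod d) + 3 = (3 : ZMod d) from by ring] at h
    exact fun hh => Fin.val_ne_of_ne h hh.symm
  have E6 : (c (1 : ZMod d) : ℕ) ≠ (c (4 : ZMod d) : ℕ) := by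
    have h := h3 (1 : ZMod d)
    rw [show (1 : ZMod d) + 3 = (4 : ZMod d) from by ring] at h
    exact fun hh => Fin.val_ne_of_ne h hh.symm
  have E7 : (c (-4 : ZMod d) : ℕ) ≠ (c (0 : ZMod d) : ℕ) := by
    have h := h4 (-4 : ZMod d)
    rw [show (-4 : ZMod d) + 4 = (0 : ZMod d) from by ring] at h
    exact fun hh => Fin.val_ne_of_ne h hh.symm
  have E8 : (c (-3 : ZMod d) : ℕ) ≠ (c (1 : ZMod d) : ℕ) := by
    have h := h4 (-3 : ZMod d)
    rw [show (-3 : ZMod d) + 4 = (1 : ZMod d) from by ring] at h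
    exact fun hh => Fin.val_ne_of_ne h hh.symm
  have E9 : (c (-2 : ZMod d) : ℕ) ≠ (c (2 : ZMod d) : ℕ) := by
    have h := h4 (-2 : ZMod d)
    rw [show (-2 : ZMod d) + 4 = (2 : ZMod d) from by ring] at h
    exact fun hh => Fin.val_ne_of_ne h hh.symm
  have E10 : (c (-1 : ZMod d) : ℕ) ≠ (c (3 : ZMod d) : ℕ) := by
    have h := h4 (-1 : ZMod d)
    rw [show (-1 : ZMod d) + 4 = (3 : ZMod d) from by ring] at h
    exact fun hh => Fin.val_ne_of_ne h hh.symm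
  have E11 : (c (0 : ZMod d) : ℕ) ≠ (c (4 : ZMod d) : ℕ) := by
    have h := h4 (0 : ZMod d)
    rw [show (0 : ZMod d) + 4 = (4 : ZMod d) from by ring] at h
    exact fun hh => Fin.val_ne_of_ne h hh.symm
  have main := key_stmt_10 (c (-4 : ZMod d) : ℕ) (c (-3 : ZMod d) : ℕ) (c (-2 : ZMod d) : ℕ) (c (-1 : ZMod d) : ℕ) (c (0 : ZMod d) : ℕ) (c (1 : ZMod d) : ℕ) (c (2 : ZMod d) : ℕ) (c (3 : ZMod d) : ℕ) (c (4 : ZMod d) : ℕ) Hz Bb4 Bb3 Bb2 Bb1 Ba1 Ba2 Ba3 Ba4 D1 D2 D3 D4 D5 D6 D7 D8 D9 D10 D11 D12 D13 D14 D15 E1 E2 E3 E4 E5 E6 E7 E8 E9 E10 E11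
  have e2 : ((2 : Fin 7) : ℕ) = 2 := rfl
  have e5 : ((5 : Fin 7) : ℕ) = 5 := rfl
  rcases main with ⟨u, v⟩ | ⟨u, v⟩
  · exact Or.inl ⟨Fin.ext (by rw [e2]; exact u), Fin.ext (by rw [e5]; exact v)⟩
  · exact Or.inr ⟨Fin.ext (by rw [e5]; exact u), Fin.ext (by rw [e2]; exact v)⟩
end

section
/- Let d ≥ 5 and let c : ZMod d → Fin 7 be an L(2,2,1,1)-labeling with c(0) = 0, c(1) = 5, c(-1) = 2. Then c(2) = 3, c(3) = 1, c(4) = 6, c(5) = 4, c(6) = 2, and c(7) = 0. -/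
theorem stmt_11 (d : ℕ) (hd : 5 ≤ d) (c : ZMod d → Fin 7)
    (h1 : ∀ i : ZMod d, (2 : ℤ) ≤ |((c (i + 1) : ℕ) : ℤ) - ((c i : ℕ) : ℤ)|)
    (h2 : ∀ i : ZMod d, (2 : ℤ) ≤ |((c (i + 2) : ℕ) : ℤ) - ((c i : ℕ) : ℤ)|)
    (h3 : ∀ i : ZMod d, c (i + 3) ≠ c i)
    (h4 : ∀ i : ZMod d, c (i + 4) ≠ c i)
    (h0 : c 0 = 0) (hp1 : c 1 = 5) (hm1 : c (-1) = 2) :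
    c 2 = 3 ∧ c 3 = 1 ∧ c 4 = 6 ∧ c 5 = 4 ∧ c 6 = 2 ∧ c 7 = 0 := by
  have A1 : ∀ n m : ZMod d, n + 1 = m →
      2 ≤ ((c m : ℕ) : ℤ) - ((c n : ℕ) : ℤ) ∨
      2 ≤ -(((c m : ℕ) : ℤ) - ((c n : ℕ) : ℤ)) :=
    fun n m h => h ▸ le_abs.mp (h1 n)
  have A2 : ∀ n m : ZMod d, n + 2 = m →
      2 ≤ ((c m : ℕ) : ℤ) - ((c n : ℕ) : ℤ) ∨
      2 ≤ -(((c m : ℕ) : ℤ) - ((c n : ℕ) : ℤ)) :=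
    fun n m h => h ▸ le_abs.mp (h2 n)
  have A3 : ∀ n m : ZMod d, n + 3 = m → ((c m : ℕ) : ℤ) ≠ ((c n : ℕ) : ℤ) := by
    intro n m h hv
    exact h3 n (h ▸ Fin.ext (by exact_mod_cast hv))
  have A4 : ∀ n m : ZMod d, n + 4 = m → ((c m : ℕ) : ℤ) ≠ ((c n : ℕ) : ℤ) := by
    intro n m h hv
    exact h4 n (h ▸ Fin.ext (by exact_mod_cast hv))
  have V : ∀ i : ZMod d, ((c i : ℕ) : ℤ) < 7 := fun i => by exact_mod_cast (c i).isLt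
  have k0 : ((c 0 : ℕ) : ℤ) = 0 := by rw [h0]; rfl
  have k1 : ((c 1 : ℕ) : ℤ) = 5 := by rw [hp1]; rfl
  have km1 : ((c (-1) : ℕ) : ℤ) = 2 := by rw [hm1]; rfl
  -- step c 2 = 3
  have e01 := A1 1 2 (by ring)
  have e02 := A2 0 2 (by ring)
  have e3 := A3 (-1) 2 (by ring)
  have v2 := V 2
  have n2 : ((c 2 : ℕ) : ℤ) = 3 := by omega
  -- step c 3 = 1
  have e12 := A1 2 3 (by ring)
  have e13 := A2 1 3 (by ring)
  have e30 := A3 0 3 (by ring)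
  have v3 := V 3
  have n3 : ((c 3 : ℕ) : ℤ) = 1 := by omega
  -- step c 4 = 6
  have e34 := A1 3 4 (by ring)
  have e24 := A2 2 4 (by ring)
  have e41 := A3 1 4 (by ring)
  have v4 := V 4
  have n4 : ((c 4 : ℕ) : ℤ) = 6 := by omega
  -- step c 5 = 4
  have e45 := A1 4 5 (by ring)
  have e35 := A2 3 5 (by ring)
  have e52 := A3 2 5 (by ring)
  have v5 := V 5
  have n5 : ((c 5 : ℕ) : ℤ) = 4 := by omega
  -- step c 6 = 2 (needs ruling out 0 via vertices 7,8,9)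
  have e56 := A1 5 6 (by ring)
  have e46 := A2 4 6 (by ring)
  have e63 := A3 3 6 (by ring)
  have e62 := A4 2 6 (by ring)
  have v6 := V 6
  have e67 := A1 6 7 (by ring)
  have e57 := A2 5 7 (by ring)
  have e74 := A3 4 7 (by ring)
  have e73 := A4 3 7 (by ring)
  have v7 := V 7
  have e78 := A1 7 8 (by ring)
  have e68 := A2 6 8 (by ring)
  have e85 := A3 5 8 (by ring)
  have e84 := A4 4 8 (by ring)
  have v8 := V 8
  have e89 := A1 8 9 (by ring)
  have e79 := A2 7 9 (by ring)
  have e96 := A3 6 9 (by ring)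
  have e95 := A4 5 9 (by ring)
  have v9 := V 9
  have n6 : ((c 6 : ℕ) : ℤ) = 2 := by omega
  have n7 : ((c 7 : ℕ) : ℤ) = 0 := by omega
  refine ⟨?_, ?_, ?_, ?_, ?_, ?_⟩ <;>
    · apply Fin.ext
      first
        | (show (c 2).val = 3; omega)
        | (show (c 3).val = 1; omega)
        | (show (c 4).val = 6; omega)
        | (show (c 5).val = 4; omega)
        | (show (c 6).val = 2; omega)
        | (show (c 7).val = 0; omega)
end

section
/- Let m ≥ n + 3 ≥ 6 and let f : ZMod m × ZMod n → Fin 5 be a 4-L(2,1)-labeling of C_m □ C_n (hence diagonal: f(i,j) = f(i+1,j-1)). Then the restriction g on ZMod (m-n) × ZMod n defined by g(i,j) = f(i,j) (identifying representatives 1 ≤ i ≤ m-n) is a 4-L(2,1)-labeling of C_{m-n} □ C_n. -/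
theorem stmt_15 (m n : ℕ) (hn : 3 ≤ n) (hm : n + 3 ≤ m)
    (f : ZMod m × ZMod n → Fin 5)
    (h1 : ∀ i : ZMod m, ∀ j : ZMod n,
      (2 : ℤ) ≤ |((f (i + 1, j) : ℕ) : ℤ) - ((f (i, j) : ℕ) : ℤ)|)
    (h2 : ∀ i : ZMod m, ∀ j : ZMod n,
      (2 : ℤ) ≤ |((f (i, j + 1) : ℕ) : ℤ) - ((f (i, j) : ℕ) : ℤ)|)
    (h3 : ∀ i : ZMod m, ∀ j : ZMod n, f (i + 2, j) ≠ f (i, j))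
    (h4 : ∀ i : ZMod m, ∀ j : ZMod n, f (i, j + 2) ≠ f (i, j))
    (h5 : ∀ i : ZMod m, ∀ j : ZMod n, f (i + 1, j + 1) ≠ f (i, j))
    (hdiag : ∀ i : ZMod m, ∀ j : ZMod n, f (i, j) = f (i + 1, j - 1))
    (g : ZMod (m - n) × ZMod n → Fin 5)
    (hg : ∀ i : ZMod (m - n), ∀ j : ZMod n, g (i, j) = f ((i.val : ZMod m), j)) :
    (∀ i : ZMod (m - n), ∀ j : ZMod n,
      (2 : ℤ) ≤ |((g (i + 1, j) : ℕ) : ℤ) - ((g (i, j) : ℕ) : ℤ)|) ∧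
    (∀ i : ZMod (m - n), ∀ j : ZMod n,
      (2 : ℤ) ≤ |((g (i, j + 1) : ℕ) : ℤ) - ((g (i, j) : ℕ) : ℤ)|) ∧
    (∀ i : ZMod (m - n), ∀ j : ZMod n, g (i + 2, j) ≠ g (i, j)) ∧
    (∀ i : ZMod (m - n), ∀ j : ZMod n, g (i, j + 2) ≠ g (i, j)) ∧
    (∀ i : ZMod (m - n), ∀ j : ZMod n, g (i + 1, j + 1) ≠ g (i, j)) := by
  haveI : NeZero (m - n) := ⟨by omega⟩
  haveI : NeZero m := ⟨by omega⟩
  -- diagonal iteration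
  have diag : ∀ (k : ℕ) (i : ZMod m) (j : ZMod n), f (i, j) = f (i + (k : ZMod m), j - (k : ZMod n)) := by
    intro k
    induction k with
    | zero => simp
    | succ k ih =>
      intro i j
      rw [ih i j, hdiag (i + (k : ZMod m)) (j - (k : ZMod n))]
      push_cast
      ring_nf
  have per : ∀ (i : ZMod m) (j : ZMod n), f (i + (n : ZMod m), j) = f (i, j) := by
    intro i j
    have h := diag n i j
    rw [ZMod.natCast_self n, sub_zero] at h
    exact h.symm
  have per2 : ∀ (i : ZMod m) (j : ZMod n), f (i + ((m - n : ℕ) : ZMod m), j) = f (i, j) := by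
    intro i j
    have h := per (i + ((m - n : ℕ) : ZMod m)) j
    have e : i + ((m - n : ℕ) : ZMod m) + (n : ZMod m) = i := by
      rw [add_assoc, ← Nat.cast_add]
      have : m - n + n = m := by omega
      rw [this, ZMod.natCast_self, add_zero]
    rw [e] at h
    exact h.symm
  have per3 : ∀ (t : ℕ) (i : ZMod m) (j : ZMod n),
      f (i + (((m - n) * t : ℕ) : ZMod m), j) = f (i, j) := by
    intro t
    induction t with
    | zero => simp
    | succ t ih =>
      intro i j
      have e : ((m - n) * (t + 1) : ℕ) = (m - n) * t + (m - n) := by ring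
      rw [e, Nat.cast_add, ← add_assoc, per2, ih]
  have key : ∀ (i : ZMod (m - n)) (k : ℕ) (j : ZMod n),
      f (((i + (k : ZMod (m - n))).val : ZMod m), j) = f ((i.val : ZMod m) + (k : ZMod m), j) := by
    intro i k j
    have hv : (i + (k : ZMod (m - n))).val = (i.val + k) % (m - n) := by
      rw [ZMod.val_add, ZMod.val_natCast, Nat.add_mod_mod]
    have hmd := Nat.mod_add_div (i.val + k) (m - n)
    set t := (i.val + k) / (m - n) with ht
    have heq : i.val + k = (i + (k : ZMod (m - n))).val + (m - n) * t := by
      rw [hv]; omega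
    calc f (((i + (k : ZMod (m - n))).val : ZMod m), j)
        = f (((i + (k : ZMod (m - n))).val : ZMod m) + (((m - n) * t : ℕ) : ZMod m), j) :=
          (per3 t _ j).symm
      _ = f ((i.val : ZMod m) + (k : ZMod m), j) := by
          rw [← Nat.cast_add, ← heq, Nat.cast_add]
  have key1 : ∀ (i : ZMod (m - n)) (j : ZMod n),
      f (((i + 1).val : ZMod m), j) = f ((i.val : ZMod m) + 1, j) := by
    intro i j
    have h := key i 1 j
    simpa using h
  have key2 : ∀ (i : ZMod (m - n)) (j : ZMod n),
      f (((i + 2).val : ZMod m), j) = f ((i.val : ZMod m) + 2, j) := by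
    intro i j
    have h := key i 2 j
    simpa using h
  refine ⟨?_, ?_, ?_, ?_, ?_⟩
  · intro i j
    rw [hg, hg, key1]
    exact h1 _ j
  · intro i j
    rw [hg, hg]
    exact h2 _ j
  · intro i j
    rw [hg, hg, key2]
    exact h3 _ j
  · intro i j
    rw [hg, hg]
    exact h4 _ j
  · intro i j
    rw [hg, hg, key1]
    exact h5 _ j
end

section
/- If 8 divides m (m ≥ 8), then the function f : ZMod m × ZMod m → Fin 8 defined by f(i,j) = g((i.val + j.val) mod 8), where g(r) = 0,2,4,6,1,3,5,7 for r = 0,...,7 respectively, is a 7-L(2,1)-labeling of the strong product C_m ⊠ C_m. -/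
theorem stmt_16 (m : ℕ) (hm : 8 ≤ m) (h8 : 8 ∣ m)
    (f : ZMod m × ZMod m → Fin 8)
    (hf : ∀ i j : ZMod m,
      f (i, j) = ![(0 : Fin 8), 2, 4, 6, 1, 3, 5, 7]
        ⟨(i.val + j.val) % 8, Nat.mod_lt _ (by norm_num)⟩) :
    (∀ i j : ZMod m,
      ∀ ab : ZMod m × ZMod m, ab ∈ [((1 : ZMod m), (0 : ZMod m)), (0, 1), (1, 1)] →
        (2 : ℤ) ≤ |((f (i + ab.1, j + ab.2) : ℕ) : ℤ) - ((f (i, j) : ℕ) : ℤ)|) ∧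
    (∀ i j : ZMod m,
      ∀ ab : ZMod m × ZMod m,
        ab ∈ [((2 : ZMod m), (0 : ZMod m)), (0, 2), (2, 1), (1, 2), (2, 2)] →
        f (i + ab.1, j + ab.2) ≠ f (i, j)) := by
  haveI : NeZero m := ⟨by omega⟩
  haveI : Fact (1 < m) := ⟨by omega⟩
  have h1 : (1 : ZMod m).val = 1 := ZMod.val_one m
  have h2 : (2 : ZMod m).val = 2 := by
    have h := ZMod.val_natCast (n := m) 2
    rw [Nat.mod_eq_of_lt (by omega)] at h
    simpa using h
  have h0 : (0 : ZMod m).val = 0 := ZMod.val_zero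
  have hval : ∀ x y : ZMod m, (x + y).val % 8 = (x.val + y.val) % 8 := by
    intro x y
    rw [ZMod.val_add]
    exact Nat.mod_mod_of_dvd _ h8
  have key : ∀ (i j a b : ZMod m),
      ((i + a).val + (j + b).val) % 8 = ((i.val + j.val) % 8 + (a.val + b.val)) % 8 := by
    intro i j a b
    have e1 := hval i a
    have e2 := hval j b
    omega
  have gval : ∀ (k : ℕ) (h : k < 8),
      ((![(0 : Fin 8), 2, 4, 6, 1, 3, 5, 7] ⟨k, h⟩ : Fin 8) : ℕ) = 2 * k % 8 + k / 4 := by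
    intro k h
    interval_cases k <;> rfl
  constructor
  · intro i j ab hab
    fin_cases hab <;>
    · simp only [hf, key, h0, h1, h2, gval]
      rw [le_abs]
      have hc : (i.val + j.val) % 8 = 0 ∨ (i.val + j.val) % 8 = 1 ∨
          (i.val + j.val) % 8 = 2 ∨ (i.val + j.val) % 8 = 3 ∨
          (i.val + j.val) % 8 = 4 ∨ (i.val + j.val) % 8 = 5 ∨
          (i.val + j.val) % 8 = 6 ∨ (i.val + j.val) % 8 = 7 := by omega
      rcases hc with h|h|h|h|h|h|h|h <;> rw [h] <;> norm_num
  · intro i j ab hab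
    fin_cases hab <;>
    · simp only [hf, key, h0, h1, h2, ne_eq, Fin.ext_iff, gval]
      omega
end

section
/- For every k ≥ 3, there is no function c : ZMod (k+2) × ZMod k → Fin 7 that is a 6-L(2,1)-labeling of C_{k+2} ⊠ C_k and diagonal (c(i,j) = c(i+1,j-1) for all i,j). -/
theorem stmt_18 (k : ℕ) (hk : 3 ≤ k) :
    ¬ ∃ c : ZMod (k + 2) × ZMod k → Fin 7,
      (∀ i : ZMod (k + 2), ∀ j : ZMod k,
        ∀ ab : ZMod (k + 2) × ZMod k,
          ab ∈ [((1 : ZMod (k + 2)), (0 : ZMod k)), (0, 1), (1, 1)] →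
          (2 : ℤ) ≤ |((c (i + ab.1, j + ab.2) : ℕ) : ℤ) - ((c (i, j) : ℕ) : ℤ)|) ∧
      (∀ i : ZMod (k + 2), ∀ j : ZMod k,
        ∀ ab : ZMod (k + 2) × ZMod k,
          ab ∈ [((2 : ZMod (k + 2)), (0 : ZMod k)), (0, 2), (2, 1), (1, 2), (2, 2)] →
          c (i + ab.1, j + ab.2) ≠ c (i, j)) ∧
      (∀ i : ZMod (k + 2), ∀ j : ZMod k, c (i, j) = c (i + 1, j - 1)) := by
  rintro ⟨c, _h1, h2, h3⟩
  have hdiag : ∀ (n : ℕ) (i : ZMod (k + 2)) (j : ZMod k),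
      c (i, j) = c (i + (n : ZMod (k + 2)), j - (n : ZMod k)) := by
    intro n
    induction n with
    | zero => intro i j; simp
    | succ n ih =>
      intro i j
      rw [ih i j, h3 (i + n) (j - n)]
      push_cast
      ring_nf
  have key : ∀ (i : ZMod (k + 2)) (j : ZMod k), c (i, j) = c (i + (k : ZMod (k + 2)), j) := by
    intro i j
    have := hdiag k i j
    rwa [show ((k : ZMod k)) = 0 by exact_mod_cast ZMod.natCast_self k, sub_zero] at this
  have hk2 : (k : ZMod (k + 2)) = -2 := by
    have : ((k + 2 : ℕ) : ZMod (k + 2)) = 0 := ZMod.natCast_self _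
    push_cast at this
    linear_combination this
  have h := h2 (0 - 2 : ZMod (k + 2)) 0 (2, 0) (by simp)
  apply h
  have := key (0 - 2 + 2) 0
  rw [hk2, show (0:ZMod (k+2)) - 2 + 2 + -2 = 0 - 2 by ring] at this
  simpa using this
end

section
/- For every d ≥ 3 divisible by 7, the function c : ZMod d → Fin 7 given by repeating the pattern 0,2,4,6,1,3,5 (i.e., c(i) = pattern[i mod 7]) is an L(2,2,1,1)-labeling: |c(i+1)-c(i)| ≥ 2, |c(i+2)-c(i)| ≥ 2, c(i+3) ≠ c(i), and c(i+4) ≠ c(i) for all i ∈ ZMod d. -/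
theorem stmt_19 (d : ℕ) (hd : 3 ≤ d) (h7 : 7 ∣ d)
    (c : ZMod d → Fin 7)
    (hc : ∀ i : ZMod d,
      c i = ![(0 : Fin 7), 2, 4, 6, 1, 3, 5] ⟨i.val % 7, Nat.mod_lt _ (by norm_num)⟩) :
    (∀ i : ZMod d, (2 : ℤ) ≤ |((c (i + 1) : ℕ) : ℤ) - ((c i : ℕ) : ℤ)|) ∧
    (∀ i : ZMod d, (2 : ℤ) ≤ |((c (i + 2) : ℕ) : ℤ) - ((c i : ℕ) : ℤ)|) ∧
    (∀ i : ZMod d, c (i + 3) ≠ c i) ∧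
    (∀ i : ZMod d, c (i + 4) ≠ c i) := by
  have hd7 : 7 ≤ d := Nat.le_of_dvd (by omega) h7
  haveI : NeZero d := ⟨by omega⟩
  set g : ℕ → Fin 7 := fun n =>
    ![(0 : Fin 7), 2, 4, 6, 1, 3, 5] ⟨n % 7, Nat.mod_lt _ (by norm_num)⟩ with hg
  have hgc : ∀ (n m : ℕ), n % 7 = m % 7 → g n = g m := by
    intro n m h
    simp only [hg, h]
  have hval : ∀ (i : ZMod d) (k : ℕ), k < 7 → c (i + (k : ZMod d)) = g (i.val + k) := by
    intro i k hk
    rw [hc]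
    apply hgc
    rw [ZMod.val_add, Nat.mod_mod_of_dvd _ h7, ZMod.val_natCast,
      Nat.mod_eq_of_lt (lt_of_lt_of_le hk hd7)]
  have h0 : ∀ i : ZMod d, c i = g i.val := fun i => hc i
  have h1 : ∀ i : ZMod d, c (i + 1) = g (i.val + 1) := by
    intro i
    have := hval i 1 (by norm_num); rwa [Nat.cast_one] at this
  have h2 : ∀ i : ZMod d, c (i + 2) = g (i.val + 2) := by
    intro i
    have := hval i 2 (by norm_num); rwa [Nat.cast_ofNat] at this
  have h3 : ∀ i : ZMod d, c (i + 3) = g (i.val + 3) := by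
    intro i
    have := hval i 3 (by norm_num); rwa [Nat.cast_ofNat] at this
  have h4 : ∀ i : ZMod d, c (i + 4) = g (i.val + 4) := by
    intro i
    have := hval i 4 (by norm_num); rwa [Nat.cast_ofNat] at this
  have main : ∀ n : ℕ,
      ((2 : ℤ) ≤ |((g (n + 1) : ℕ) : ℤ) - ((g n : ℕ) : ℤ)|) ∧
      ((2 : ℤ) ≤ |((g (n + 2) : ℕ) : ℤ) - ((g n : ℕ) : ℤ)|) ∧
      (g (n + 3) ≠ g n) ∧ (g (n + 4) ≠ g n) := by
    intro n
    have hr : n % 7 < 7 := Nat.mod_lt _ (by norm_num)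
    have q1 : g (n + 1) = g (n % 7 + 1) := hgc _ _ (by omega)
    have q2 : g (n + 2) = g (n % 7 + 2) := hgc _ _ (by omega)
    have q3 : g (n + 3) = g (n % 7 + 3) := hgc _ _ (by omega)
    have q4 : g (n + 4) = g (n % 7 + 4) := hgc _ _ (by omega)
    have q0 : g n = g (n % 7) := hgc _ _ (by omega)
    rw [q0, q1, q2, q3, q4]
    set r := n % 7 with hrdef
    clear_value r
    interval_cases r <;> refine ⟨?_, ?_, ?_, ?_⟩ <;> simp [hg] <;> decide
  exact ⟨fun i => by rw [h1, h0]; exact (main i.val).1,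
    fun i => by rw [h2, h0]; exact (main i.val).2.1,
    fun i => by rw [h3, h0]; exact (main i.val).2.2.1,
    fun i => by rw [h4, h0]; exact (main i.val).2.2.2⟩
end
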